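/- Let p be a prime and C(x,y) = a x^3 + b y^3 a primitive integral binary cubic form that is anisotropic modulo p. Then the set R(C) = { C(x,y)/C(z,w) : x,y,z,w ∈ Z, C(z,w) ≠ 0 } is not dense in Q_p. -/

import Mathlib

lemma key_norm (p : ℕ) [hp : Fact p.Prime] (a b : ℤ)
    (haniso : ∀ x y : ℤ, (p : ℤ) ∣ (a * x ^ 3 + b * y ^ 3) → (p : ℤ) ∣ x ∧ (p : ℤ) ∣ y) :
    ∀ n : ℕ, ∀ x y : ℤ, (a * x ^ 3 + b * y ^ 3).natAbs = n → a * x ^ 3 + b * y ^ 3 ≠ 0 →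
      ∃ k : ℕ, ‖((a * x ^ 3 + b * y ^ 3 : ℤ) : ℚ_[p])‖ = (p : ℝ) ^ (-(3 * (k : ℤ))) := by
  intro n
  induction n using Nat.strong_induction_on with
  | _ n ih =>
    intro x y hn h0
    by_cases hdvd : (p : ℤ) ∣ (a * x ^ 3 + b * y ^ 3)
    · obtain ⟨hx, hy⟩ := haniso x y hdvd
      obtain ⟨x', rfl⟩ := hx
      obtain ⟨y', rfl⟩ := hy
      have hfac : a * ((p : ℤ) * x') ^ 3 + b * ((p : ℤ) * y') ^ 3
          = (p : ℤ) ^ 3 * (a * x' ^ 3 + b * y' ^ 3) := by ring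
      have h0' : a * x' ^ 3 + b * y' ^ 3 ≠ 0 := by
        intro h; apply h0; rw [hfac, h, mul_zero]
      have hp1 : 1 < p := hp.out.one_lt
      have hlt : (a * x' ^ 3 + b * y' ^ 3).natAbs < n := by
        subst hn
        rw [hfac, Int.natAbs_mul]
        have h1 : 0 < (a * x' ^ 3 + b * y' ^ 3).natAbs := Int.natAbs_pos.mpr h0'
        have h2 : 1 < ((p : ℤ) ^ 3).natAbs := by
          rw [Int.natAbs_pow, Int.natAbs_natCast]
          exact Nat.one_lt_pow (by norm_num) hp1
        nlinarith
      obtain ⟨k, hk⟩ := ih _ hlt x' y' rfl h0'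
      refine ⟨k + 1, ?_⟩
      have hpne : (p : ℝ) ≠ 0 := by positivity
      rw [hfac, Int.cast_mul, Int.cast_pow, norm_mul, norm_pow, Int.cast_natCast, Padic.norm_p, hk,
        inv_pow, ← zpow_natCast (p:ℝ) 3, ← zpow_neg, ← zpow_add₀ hpne]
      congr 1
      push_cast
      ring
    · refine ⟨0, ?_⟩
      simp only [Nat.cast_zero, mul_zero, neg_zero, zpow_zero]
      exact le_antisymm (Padic.norm_int_le_one _)
        (not_lt.mp fun h => hdvd ((Padic.norm_intCast_lt_one_iff).mp h))

theorem stmt_1 (p : ℕ) [Fact p.Prime] (a b : ℤ) (ha : a ≠ 0) (hb : b ≠ 0)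
    (hprim : IsCoprime a b)
    (haniso : ∀ x y : ℤ, (p : ℤ) ∣ (a * x ^ 3 + b * y ^ 3) → (p : ℤ) ∣ x ∧ (p : ℤ) ∣ y) :
    ¬ Dense {q : ℚ_[p] | ∃ x y z w : ℤ, a * z ^ 3 + b * w ^ 3 ≠ 0 ∧
      q = ((a * x ^ 3 + b * y ^ 3 : ℤ) : ℚ_[p]) / ((a * z ^ 3 + b * w ^ 3 : ℤ) : ℚ_[p])} := by
  intro hdense
  have hp1 : 1 < (p : ℝ) := by exact_mod_cast (Fact.out : p.Prime).one_lt
  have hp0 : (0 : ℝ) < (p : ℝ)⁻¹ := by positivity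
  obtain ⟨q, hqball, hqS⟩ := (Metric.dense_iff.mp hdense (p : ℚ_[p]) ((p : ℝ)⁻¹) hp0)
  have hdist : ‖q - (p : ℚ_[p])‖ < (p : ℝ)⁻¹ := by
    simpa [dist_eq_norm] using Metric.mem_ball.mp hqball
  have hnp : ‖((p : ℚ_[p]))‖ = (p : ℝ)⁻¹ := Padic.norm_p
  have hne : ‖q - (p : ℚ_[p])‖ ≠ ‖(p : ℚ_[p])‖ := by rw [hnp]; exact hdist.ne
  have hq : ‖q‖ = (p : ℝ)⁻¹ := by
    have : q = (q - (p : ℚ_[p])) + (p : ℚ_[p]) := by ring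
    rw [this, Padic.add_eq_max_of_ne hne, hnp, max_eq_right (le_of_lt (hnp ▸ hdist))]
  obtain ⟨x, y, z, w, hzw, rfl⟩ := hqS
  obtain ⟨l, hl⟩ := key_norm p a b haniso _ z w rfl hzw
  by_cases hxy : a * x ^ 3 + b * y ^ 3 = 0
  · rw [hxy] at hq
    simp at hq
    linarith
  · obtain ⟨k, hk⟩ := key_norm p a b haniso _ x y rfl hxy
    rw [norm_div, hk, hl, ← zpow_sub₀ (by positivity : (p:ℝ) ≠ 0)] at hq
    rw [show (p:ℝ)⁻¹ = (p:ℝ) ^ (-1 : ℤ) by simp] at hq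
    have := zpow_right_injective₀ (by positivity) (ne_of_gt hp1) hq
    omega
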